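/- If G is a cubic graph that is bipartite, then the 3-coalition number of G satisfies C_3(G) = 4. -/

import Mathlib

open SimpleGraph

/-- A set `S` is a `k`-dominating set of `G` if every vertex outside `S`
has at least `k` neighbors in `S`. -/
def KDominatingSet {V : Type*} (G : SimpleGraph V) (k : ℕ) (S : Set V) : Prop :=
  ∀ v ∉ S, k ≤ (S ∩ G.neighborSet v).ncard

/-- Two disjoint sets `A` and `B` form a `k`-coalition in `G` if neither is a
`k`-dominating set of `G` but their union is. -/
def KCoalition {V : Type*} (G : SimpleGraph V) (k : ℕ) (A B : Set V) : Prop :=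
  Disjoint A B ∧ ¬ KDominatingSet G k A ∧ ¬ KDominatingSet G k B ∧
    KDominatingSet G k (A ∪ B)

/-- A `k`-coalition partition of `G` is a partition of the vertex set in which every
part is either a `k`-dominating set of cardinality `k` or forms a `k`-coalition with
another part. -/
def KCoalitionPartition {V : Type*} (G : SimpleGraph V) (k : ℕ) (P : Finset (Set V)) : Prop :=
  (∀ A ∈ P, A.Nonempty) ∧
  (P : Set (Set V)).PairwiseDisjoint id ∧
  (⋃ A ∈ P, A) = (Set.univ : Set V) ∧
  ∀ A ∈ P, (KDominatingSet G k A ∧ A.ncard = k) ∨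
    ∃ B ∈ P, B ≠ A ∧ KCoalition G k A B

/-- The `k`-coalition number of `G`: the maximum cardinality of a
`k`-coalition partition of `G`. -/
noncomputable def kCoalitionNumber {V : Type*} (G : SimpleGraph V) (k : ℕ) : ℕ :=
  sSup {n | ∃ P : Finset (Set V), KCoalitionPartition G k P ∧ P.card = n}

section Aux

variable {V : Type*} [Fintype V] {G : SimpleGraph V} [DecidableRel G.Adj]

lemma aux_neighborSet_ncard (v : V) : (G.neighborSet v).ncard = G.degree v := by
  rw [Set.ncard_eq_toFinset_card', SimpleGraph.degree, SimpleGraph.neighborFinset_def]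

lemma aux_kdom_nbr (hcubic : ∀ v : V, G.degree v = 3) {S : Set V}
    (h : KDominatingSet G 3 S) {v u : V} (hv : v ∉ S) (ha : G.Adj v u) : u ∈ S := by
  by_contra hu
  have h3 := h v hv
  have hsub : S ∩ G.neighborSet v ⊆ G.neighborSet v \ {u} := by
    rintro w ⟨hwS, hwN⟩
    exact ⟨hwN, by rintro rfl; exact hu hwS⟩
  have hle : (S ∩ G.neighborSet v).ncard ≤ (G.neighborSet v \ {u}).ncard :=
    Set.ncard_le_ncard hsub (Set.toFinite _)
  have hmem : u ∈ G.neighborSet v := ha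
  have hd : (G.neighborSet v \ {u}).ncard = 2 := by
    rw [Set.ncard_diff_singleton_of_mem hmem, aux_neighborSet_ncard, hcubic]
  omega

lemma aux_kdom_of (hcubic : ∀ v : V, G.degree v = 3) {S : Set V}
    (h : ∀ v ∉ S, ∀ u, G.Adj v u → u ∈ S) : KDominatingSet G 3 S := by
  intro v hv
  have heq : S ∩ G.neighborSet v = G.neighborSet v := by
    apply Set.inter_eq_right.mpr
    intro u hu
    exact h v hv u hu
  rw [heq, aux_neighborSet_ncard, hcubic]

lemma aux_exists_nbr (hcubic : ∀ v : V, G.degree v = 3) (v : V) : ∃ u, G.Adj v u := by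
  have : 0 < G.degree v := by rw [hcubic]; norm_num
  exact G.degree_pos_iff_exists_adj v |>.mp this

lemma aux_k2 (hcubic : ∀ v : V, G.degree v = 3) {S T : Set V}
    (hS : KDominatingSet G 3 S) (hT : KDominatingSet G 3 T) (hST : Disjoint S T)
    {v : V} (hv : v ∉ S ∪ T) : False := by
  obtain ⟨u, hu⟩ := aux_exists_nbr hcubic v
  have hvS : v ∉ S := fun h => hv (Or.inl h)
  have hvT : v ∉ T := fun h => hv (Or.inr h)
  exact Set.disjoint_left.mp hST (aux_kdom_nbr hcubic hS hvS hu)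
    (aux_kdom_nbr hcubic hT hvT hu)

omit [Fintype V] [DecidableRel G.Adj] in
lemma aux_kcoal_symm {k : ℕ} {A B : Set V} (h : KCoalition G k A B) : KCoalition G k B A :=
  ⟨h.1.symm, h.2.2.1, h.2.1, by rw [Set.union_comm]; exact h.2.2.2⟩

lemma aux_upper (hcubic : ∀ v : V, G.degree v = 3) (P : Finset (Set V))
    (hP : KCoalitionPartition G 3 P) : P.card ≤ 4 := by
  classical
  by_contra hlt
  push_neg at hlt
  obtain ⟨hne, hdisj, hcover, hcond⟩ := hP
  have pd : ∀ A ∈ P, ∀ B ∈ P, A ≠ B → Disjoint A B := by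
    intro A hA B hB hAB
    exact hdisj (Finset.mem_coe.mpr hA) (Finset.mem_coe.mpr hB) hAB
  have exists5 : ∀ a b c d : Set V, ∃ E ∈ P, E ≠ a ∧ E ≠ b ∧ E ≠ c ∧ E ≠ d := by
    intro a b c d
    have e1 : P.card - 1 ≤ (P.erase a).card := Finset.pred_card_le_card_erase
    have e2 : (P.erase a).card - 1 ≤ ((P.erase a).erase b).card :=
      Finset.pred_card_le_card_erase
    have e3 : ((P.erase a).erase b).card - 1 ≤ (((P.erase a).erase b).erase c).card :=
      Finset.pred_card_le_card_erase
    have e4 : (((P.erase a).erase b).erase c).card - 1 ≤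
        ((((P.erase a).erase b).erase c).erase d).card := Finset.pred_card_le_card_erase
    have hpos : 0 < ((((P.erase a).erase b).erase c).erase d).card := by omega
    obtain ⟨E, hE⟩ := Finset.card_pos.mp hpos
    simp only [Finset.mem_erase] at hE
    exact ⟨E, hE.2.2.2.2, hE.2.2.2.1, hE.2.2.1, hE.2.1, hE.1⟩
  have getpart : ∀ v : V, ∃ A ∈ P, v ∈ A := by
    intro v
    have hv : v ∈ ⋃ A ∈ P, A := hcover ▸ Set.mem_univ v
    simpa using hv
  by_cases hdom3 : ∃ D ∈ P, KDominatingSet G 3 D ∧ D.ncard = 3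
  · obtain ⟨D, hDP, hDdom, hD3⟩ := hdom3
    have hND : ∀ v ∉ D, G.neighborSet v = D := by
      intro v hv
      refine Set.eq_of_subset_of_ncard_le (fun u hu => aux_kdom_nbr hcubic hDdom hv hu)
        ?_ (Set.toFinite _)
      rw [aux_neighborSet_ncard, hcubic, hD3]
    obtain ⟨A, hAP, hAD, -, -, -⟩ := exists5 D D D D
    obtain ⟨B, hBP, hBD, hBA, -, -⟩ := exists5 D A A A
    obtain ⟨C, hCP, hCD, hCA, hCB, -⟩ := exists5 D A B B
    obtain ⟨E, hEP, hED, hEA, hEB, hEC⟩ := exists5 D A B C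
    obtain ⟨a, ha⟩ := hne A hAP
    obtain ⟨b, hb⟩ := hne B hBP
    obtain ⟨c, hc⟩ := hne C hCP
    obtain ⟨e, he⟩ := hne E hEP
    have memne : ∀ (S T : Set V), S ∈ P → T ∈ P → S ≠ T → ∀ s ∈ S, ∀ t ∈ T, s ≠ t := by
      intro S T hS hT hST s hs t ht hst
      exact Set.disjoint_left.mp (pd S hS T hT hST) hs (hst ▸ ht)
    have hab : a ≠ b := memne A B hAP hBP (Ne.symm hBA) a ha b hb
    have hac : a ≠ c := memne A C hAP hCP (Ne.symm hCA) a ha c hc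
    have hae : a ≠ e := memne A E hAP hEP (Ne.symm hEA) a ha e he
    have hbc : b ≠ c := memne B C hBP hCP (Ne.symm hCB) b hb c hc
    have hbe : b ≠ e := memne B E hBP hEP (Ne.symm hEB) b hb e he
    have hce : c ≠ e := memne C E hCP hEP (Ne.symm hEC) c hc e he
    have hnotD : ∀ (S : Set V), S ∈ P → S ≠ D → ∀ s ∈ S, s ∉ D := by
      intro S hS hSD s hs
      exact Set.disjoint_left.mp (pd S hS D hDP hSD) hs
    have haD := hnotD A hAP hAD a ha
    have hbD := hnotD B hBP hBD b hb
    have hcD := hnotD C hCP hCD c hc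
    have heD := hnotD E hEP hED e he
    obtain ⟨d, hd⟩ : D.Nonempty := hne D hDP
    have hadjd : ∀ v ∉ D, v ∈ G.neighborSet d := by
      intro v hv
      have hdN : d ∈ G.neighborSet v := (hND v hv) ▸ hd
      exact G.adj_symm hdN
    have hsub : ({a, b, c, e} : Set V) ⊆ G.neighborSet d := by
      rintro x (rfl | rfl | rfl | rfl)
      · exact hadjd _ haD
      · exact hadjd _ hbD
      · exact hadjd _ hcD
      · exact hadjd _ heD
    have h4 : ({a, b, c, e} : Set V).ncard = 4 := by
      rw [Set.ncard_insert_of_notMem (by simp [hab, hac, hae]) (Set.toFinite _),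
        Set.ncard_insert_of_notMem (by simp [hbc, hbe]) (Set.toFinite _),
        Set.ncard_insert_of_notMem (by simp [hce]) (Set.toFinite _),
        Set.ncard_singleton]
    have hle := Set.ncard_le_ncard hsub (Set.toFinite _)
    rw [h4, aux_neighborSet_ncard, hcubic] at hle
    omega
  · push_neg at hdom3
    have partner : ∀ X ∈ P, ∃ Y ∈ P, Y ≠ X ∧ KCoalition G 3 X Y := by
      intro X hX
      rcases hcond X hX with h | h
      · exact absurd h.2 (hdom3 X hX h.1)
      · exact h
    have M : ∀ C D E F : Set V, C ∈ P → D ∈ P → E ∈ P → F ∈ P →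
        C ≠ D → C ≠ E → C ≠ F → D ≠ E → D ≠ F → E ≠ F →
        KCoalition G 3 C D → KCoalition G 3 E F → False := by
      intro C D E F hC hD hE hF h1 h2 h3 h4 h5 h6 hc1 hc2
      obtain ⟨O, hO, hO1, hO2, hO3, hO4⟩ := exists5 C D E F
      obtain ⟨o, ho⟩ := hne O hO
      refine aux_k2 hcubic hc1.2.2.2 hc2.2.2.2 ?_ (v := o) ?_
      · exact Set.disjoint_union_left.mpr
          ⟨Set.disjoint_union_right.mpr ⟨pd C hC E hE h2, pd C hC F hF h3⟩,
           Set.disjoint_union_right.mpr ⟨pd D hD E hE h4, pd D hD F hF h5⟩⟩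
      · rintro ((h | h) | (h | h))
        · exact Set.disjoint_left.mp (pd O hO C hC hO1) ho h
        · exact Set.disjoint_left.mp (pd O hO D hD hO2) ho h
        · exact Set.disjoint_left.mp (pd O hO E hE hO3) ho h
        · exact Set.disjoint_left.mp (pd O hO F hF hO4) ho h
    have STAR : ∀ Z W X1 X2 : Set V, Z ∈ P → W ∈ P → X1 ∈ P → X2 ∈ P →
        Z ≠ W → X1 ≠ Z → X1 ≠ W → X2 ≠ Z → X2 ≠ W → X1 ≠ X2 →
        KCoalition G 3 W Z → KCoalition G 3 X1 Z → KCoalition G 3 X2 Z → False := by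
      intro Z W X1 X2 hZ hW h1 h2 hZW h1Z h1W h2Z h2W h12 hcW hc1 hc2
      have key : ∀ F ∈ P, F ≠ Z → KDominatingSet G 3 (F ∪ Z) := by
        intro F hF hFZ
        by_cases hFW : F = W
        · subst hFW; exact hcW.2.2.2
        by_cases hF1 : F = X1
        · subst hF1; exact hc1.2.2.2
        by_cases hF2 : F = X2
        · subst hF2; exact hc2.2.2.2
        obtain ⟨Y, hY, hYF, hco⟩ := partner F hF
        by_cases hYZ : Y = Z
        · subst hYZ; exact hco.2.2.2
        by_cases hY1 : Y = X1
        · rw [hY1] at hco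
          exact (M F X1 X2 Z hF h1 h2 hZ hF1 hF2 hFZ h12 h1Z h2Z hco hc2).elim
        · exact (M F Y X1 Z hF hY h1 hZ (Ne.symm hYF) hF1 hFZ hY1 hYZ h1Z hco hc1).elim
      have hNZ : ∀ v ∉ Z, ∀ u, G.Adj v u → u ∈ Z := by
        intro v hv u hadj
        obtain ⟨F, hF, hvF⟩ := getpart v
        have hFZ : F ≠ Z := fun h => hv (h ▸ hvF)
        obtain ⟨Gp, Hp, hGp, hHp, hGZ, hHZ, hGH, hGF, hHF⟩ :
            ∃ Gp Hp : Set V, Gp ∈ P ∧ Hp ∈ P ∧ Gp ≠ Z ∧ Hp ≠ Z ∧ Gp ≠ Hp ∧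
              Gp ≠ F ∧ Hp ≠ F := by
          by_cases hFW : F = W
          · exact ⟨X1, X2, h1, h2, h1Z, h2Z, h12, by rw [hFW]; exact h1W,
              by rw [hFW]; exact h2W⟩
          by_cases hF1 : F = X1
          · refine ⟨W, X2, hW, h2, Ne.symm hZW, h2Z, ?_, ?_, ?_⟩
            · intro h; exact h2W h.symm
            · intro h; exact hFW h.symm
            · intro h; rw [hF1] at h; exact h12 h.symm
          by_cases hF2 : F = X2
          · refine ⟨W, X1, hW, h1, Ne.symm hZW, h1Z, ?_, ?_, ?_⟩
            · intro h; exact h1W h.symm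
            · intro h; exact hFW h.symm
            · intro h; rw [hF2] at h; exact h12 h
          · exact ⟨X1, X2, h1, h2, h1Z, h2Z, h12, fun h => hF1 h.symm, fun h => hF2 h.symm⟩
        have hvG : v ∉ Gp ∪ Z := by
          rintro (h | h)
          · exact Set.disjoint_left.mp (pd F hF Gp hGp (fun h' => hGF h'.symm)) hvF h
          · exact hv h
        have hvH : v ∉ Hp ∪ Z := by
          rintro (h | h)
          · exact Set.disjoint_left.mp (pd F hF Hp hHp (fun h' => hHF h'.symm)) hvF h
          · exact hv h
        have hu1 : u ∈ Gp ∪ Z := aux_kdom_nbr hcubic (key Gp hGp hGZ) hvG hadj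
        have hu2 : u ∈ Hp ∪ Z := aux_kdom_nbr hcubic (key Hp hHp hHZ) hvH hadj
        rcases hu1 with h | h
        · rcases hu2 with h' | h'
          · exact (Set.disjoint_left.mp (pd Gp hGp Hp hHp hGH) h h').elim
          · exact h'
        · exact h
      exact hc1.2.2.1 (aux_kdom_of hcubic hNZ)
    have hPne : P.Nonempty := Finset.card_pos.mp (by omega)
    obtain ⟨A, hAP⟩ := hPne
    obtain ⟨B, hBP, hBA, hcoAB⟩ := partner A hAP
    obtain ⟨Xa, hXaP, hXaA, hXaB, -, -⟩ := exists5 A B B B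
    obtain ⟨Xb, hXbP, hXbA, hXbB, hXbXa, -⟩ := exists5 A B Xa Xa
    obtain ⟨Xc, hXcP, hXcA, hXcB, hXcXa, hXcXb⟩ := exists5 A B Xa Xb
    have getp : ∀ X, X ∈ P → X ≠ A → X ≠ B → ∃ Z, (Z = A ∨ Z = B) ∧ KCoalition G 3 X Z := by
      intro X hX hXA hXB
      obtain ⟨Y, hY, hYX, hco⟩ := partner X hX
      by_cases hYA : Y = A
      · exact ⟨A, Or.inl rfl, hYA ▸ hco⟩
      by_cases hYB : Y = B
      · exact ⟨B, Or.inr rfl, hYB ▸ hco⟩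
      · exact (M X Y A B hX hY hAP hBP (Ne.symm hYX) hXA hXB hYA hYB
          (Ne.symm hBA) hco hcoAB).elim
    obtain ⟨Za, hZa, hca⟩ := getp Xa hXaP hXaA hXaB
    obtain ⟨Zb, hZb, hcb⟩ := getp Xb hXbP hXbA hXbB
    obtain ⟨Zc, hZc, hcc⟩ := getp Xc hXcP hXcA hXcB
    have hAB : A ≠ B := Ne.symm hBA
    have hcoBA : KCoalition G 3 B A := aux_kcoal_symm hcoAB
    rcases hZa with h | h <;> rw [h] at hca <;> clear h <;>
      rcases hZb with h | h <;> rw [h] at hcb <;> clear h <;>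
        rcases hZc with h | h <;> rw [h] at hcc <;> clear h
    · exact STAR A B Xa Xb hAP hBP hXaP hXbP hAB hXaA hXaB hXbA hXbB
        (Ne.symm hXbXa) hcoBA hca hcb
    · exact STAR A B Xa Xb hAP hBP hXaP hXbP hAB hXaA hXaB hXbA hXbB
        (Ne.symm hXbXa) hcoBA hca hcb
    · exact STAR A B Xa Xc hAP hBP hXaP hXcP hAB hXaA hXaB hXcA hXcB
        (Ne.symm hXcXa) hcoBA hca hcc
    · exact STAR B A Xb Xc hBP hAP hXbP hXcP hBA hXbB hXbA hXcB hXcA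
        (Ne.symm hXcXb) hcoAB hcb hcc
    · exact STAR A B Xb Xc hAP hBP hXbP hXcP hAB hXbA hXbB hXcA hXcB
        (Ne.symm hXcXb) hcoBA hcb hcc
    · exact STAR B A Xa Xc hBP hAP hXaP hXcP hBA hXaB hXaA hXcB hXcA
        (Ne.symm hXcXa) hcoAB hca hcc
    · exact STAR B A Xa Xb hBP hAP hXaP hXbP hBA hXaB hXaA hXbB hXbA
        (Ne.symm hXbXa) hcoAB hca hcb
    · exact STAR B A Xa Xb hBP hAP hXaP hXbP hBA hXaB hXaA hXbB hXbA
        (Ne.symm hXbXa) hcoAB hca hcb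

end Aux

theorem c3_cubic_bipartite {V : Type*} [Fintype V] [Nonempty V] (G : SimpleGraph V)
    [DecidableRel G.Adj] (hcubic : ∀ v : V, G.degree v = 3)
    (hbip : G.Colorable 2) :
    kCoalitionNumber G 3 = 4 := by
  classical
  obtain ⟨c⟩ := hbip
  have hfin2 : ∀ i : Fin 2, i = 0 ∨ i = 1 := by decide
  set X : Set V := {v | c v = 0} with hXdef
  set Y : Set V := {v | c v = 1} with hYdef
  have hnbr : ∀ v : V, ∃ u, G.Adj v u := aux_exists_nbr hcubic
  have hXY : ∀ v : V, v ∈ X ∨ v ∈ Y := fun v => hfin2 (c v)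
  have hdisjXY : Disjoint X Y := by
    rw [Set.disjoint_left]
    intro v hvX hvY
    have h0 : c v = 0 := hvX
    have h1 : c v = 1 := hvY
    rw [h0] at h1
    exact absurd h1 (by decide)
  have adjY : ∀ v ∈ X, ∀ u, G.Adj v u → u ∈ Y := by
    intro v hv u hadj
    rcases hfin2 (c u) with h | h
    · exact absurd ((hv : c v = 0).trans h.symm) (c.valid hadj)
    · exact h
  have adjX : ∀ v ∈ Y, ∀ u, G.Adj v u → u ∈ X := by
    intro v hv u hadj
    rcases hfin2 (c u) with h | h
    · exact h
    · exact absurd ((hv : c v = 1).trans h.symm) (c.valid hadj)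
  have hKX : KDominatingSet G 3 X := aux_kdom_of hcubic (by
    intro v hv u hadj
    exact adjX v ((hXY v).resolve_left hv) u hadj)
  have hKY : KDominatingSet G 3 Y := aux_kdom_of hcubic (by
    intro v hv u hadj
    exact adjY v ((hXY v).resolve_right hv) u hadj)
  obtain ⟨x0, hx0⟩ : ∃ x, x ∈ X := by
    obtain ⟨v0⟩ := ‹Nonempty V›
    rcases hXY v0 with h | h
    · exact ⟨v0, h⟩
    · obtain ⟨u, hu⟩ := hnbr v0
      exact ⟨u, adjX v0 h u hu⟩
  obtain ⟨y0, hy0adj⟩ := hnbr x0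
  have hy0 : y0 ∈ Y := adjY x0 hx0 y0 hy0adj
  have hcard3 : ∀ v : V, 1 < (G.neighborFinset v).card := by
    intro v
    have h3 : (G.neighborFinset v).card = 3 := by
      rw [G.card_neighborFinset_eq_degree]
      exact hcubic v
    omega
  obtain ⟨x1, hx1mem, hx1ne⟩ := Finset.exists_mem_ne (hcard3 y0) x0
  have hx1adj : G.Adj y0 x1 := (G.mem_neighborFinset y0 x1).mp hx1mem
  have hx1X : x1 ∈ X := adjX y0 hy0 x1 hx1adj
  obtain ⟨y1, hy1mem, hy1ne⟩ := Finset.exists_mem_ne (hcard3 x0) y0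
  have hy1adj : G.Adj x0 y1 := (G.mem_neighborFinset x0 y1).mp hy1mem
  have hy1Y : y1 ∈ Y := adjY x0 hx0 y1 hy1adj
  set X1 : Set V := {x0} with hX1def
  set X2 : Set V := X \ {x0} with hX2def
  set Y1 : Set V := {y0} with hY1def
  set Y2 : Set V := Y \ {y0} with hY2def
  have hX1sub : X1 ⊆ X := Set.singleton_subset_iff.mpr hx0
  have hX2sub : X2 ⊆ X := Set.diff_subset
  have hY1sub : Y1 ⊆ Y := Set.singleton_subset_iff.mpr hy0
  have hY2sub : Y2 ⊆ Y := Set.diff_subset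
  have hx1X2 : x1 ∈ X2 := ⟨hx1X, fun h => hx1ne (Set.mem_singleton_iff.mp h)⟩
  have hy1Y2 : y1 ∈ Y2 := ⟨hy1Y, fun h => hy1ne (Set.mem_singleton_iff.mp h)⟩
  have hunionX : X1 ∪ X2 = X := Set.union_diff_cancel hX1sub
  have hunionY : Y1 ∪ Y2 = Y := Set.union_diff_cancel hY1sub
  have dX : Disjoint X1 X2 := Set.disjoint_sdiff_right
  have dY : Disjoint Y1 Y2 := Set.disjoint_sdiff_right
  have dc : ∀ A B : Set V, A ⊆ X → B ⊆ Y → Disjoint A B := fun A B hA hB =>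
    hdisjXY.mono hA hB
  have neXY : ∀ A B : Set V, A ⊆ X → B ⊆ Y → A.Nonempty → A ≠ B := by
    rintro A B hA hB ⟨a, ha⟩ h
    exact Set.disjoint_left.mp hdisjXY (hA ha) (hB (h ▸ ha))
  have h12 : X1 ≠ X2 := by
    intro h
    have : x0 ∈ X2 := h ▸ Set.mem_singleton x0
    exact this.2 rfl
  have hY12 : Y1 ≠ Y2 := by
    intro h
    have : y0 ∈ Y2 := h ▸ Set.mem_singleton y0
    exact this.2 rfl
  have h1Y1 : X1 ≠ Y1 := neXY _ _ hX1sub hY1sub ⟨x0, rfl⟩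
  have h1Y2 : X1 ≠ Y2 := neXY _ _ hX1sub hY2sub ⟨x0, rfl⟩
  have h2Y1 : X2 ≠ Y1 := neXY _ _ hX2sub hY1sub ⟨x1, hx1X2⟩
  have h2Y2 : X2 ≠ Y2 := neXY _ _ hX2sub hY2sub ⟨x1, hx1X2⟩
  have notkdom : ∀ (S : Set V) (v : V), v ∉ S → (S ∩ G.neighborSet v).ncard ≤ 2 →
      ¬ KDominatingSet G 3 S := by
    intro S v hv hle h
    have := h v hv
    omega
  have hnX1 : ¬ KDominatingSet G 3 X1 := by
    apply notkdom X1 y0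
    · intro h
      exact Set.disjoint_left.mp hdisjXY hx0 (Set.mem_singleton_iff.mp h ▸ hy0)
    · have h1 : (X1 ∩ G.neighborSet y0).ncard ≤ X1.ncard :=
        Set.ncard_le_ncard Set.inter_subset_left (Set.toFinite _)
      have h2 : X1.ncard = 1 := Set.ncard_singleton x0
      omega
  have hnY1 : ¬ KDominatingSet G 3 Y1 := by
    apply notkdom Y1 x0
    · intro h
      exact Set.disjoint_left.mp hdisjXY hx0 (Set.mem_singleton_iff.mp h ▸ hy0)
    · have h1 : (Y1 ∩ G.neighborSet x0).ncard ≤ Y1.ncard :=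
        Set.ncard_le_ncard Set.inter_subset_left (Set.toFinite _)
      have h2 : Y1.ncard = 1 := Set.ncard_singleton y0
      omega
  have hnX2 : ¬ KDominatingSet G 3 X2 := by
    apply notkdom X2 y0
    · intro h
      exact Set.disjoint_left.mp hdisjXY h.1 hy0
    · have hsub : X2 ∩ G.neighborSet y0 ⊆ G.neighborSet y0 \ {x0} := by
        rintro w ⟨hw2, hwN⟩
        refine ⟨hwN, fun he => ?_⟩
        rw [Set.mem_singleton_iff] at he
        subst he
        exact hw2.2 rfl
      have hx0N : x0 ∈ G.neighborSet y0 := G.adj_symm hy0adj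
      have hle := Set.ncard_le_ncard hsub (Set.toFinite _)
      rw [Set.ncard_diff_singleton_of_mem hx0N, aux_neighborSet_ncard,
        hcubic] at hle
      omega
  have hnY2 : ¬ KDominatingSet G 3 Y2 := by
    apply notkdom Y2 x1
    · intro h
      exact Set.disjoint_left.mp hdisjXY hx1X h.1
    · have hsub : Y2 ∩ G.neighborSet x1 ⊆ G.neighborSet x1 \ {y0} := by
        rintro w ⟨hw2, hwN⟩
        refine ⟨hwN, fun he => ?_⟩
        rw [Set.mem_singleton_iff] at he
        subst he
        exact hw2.2 rfl
      have hy0N : y0 ∈ G.neighborSet x1 := G.adj_symm hx1adj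
      have hle := Set.ncard_le_ncard hsub (Set.toFinite _)
      rw [Set.ncard_diff_singleton_of_mem hy0N, aux_neighborSet_ncard,
        hcubic] at hle
      omega
  have co12 : KCoalition G 3 X1 X2 := ⟨dX, hnX1, hnX2, by rw [hunionX]; exact hKX⟩
  have coY12 : KCoalition G 3 Y1 Y2 := ⟨dY, hnY1, hnY2, by rw [hunionY]; exact hKY⟩
  have hPart : KCoalitionPartition G 3 ({X1, X2, Y1, Y2} : Finset (Set V)) := by
    refine ⟨?_, ?_, ?_, ?_⟩
    · intro A hA
      simp only [Finset.mem_insert, Finset.mem_singleton] at hA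
      rcases hA with rfl | rfl | rfl | rfl
      · exact ⟨x0, rfl⟩
      · exact ⟨x1, hx1X2⟩
      · exact ⟨y0, rfl⟩
      · exact ⟨y1, hy1Y2⟩
    · intro A hA B hB hAB
      simp only [Finset.coe_insert, Finset.coe_singleton, Set.mem_insert_iff,
        Set.mem_singleton_iff] at hA hB
      rcases hA with rfl | rfl | rfl | rfl <;> rcases hB with rfl | rfl | rfl | rfl <;>
        first
          | exact absurd rfl hAB
          | exact dX
          | exact dX.symm
          | exact dY
          | exact dY.symm
          | exact dc _ _ hX1sub hY1sub
          | exact dc _ _ hX1sub hY2sub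
          | exact dc _ _ hX2sub hY1sub
          | exact dc _ _ hX2sub hY2sub
          | exact (dc _ _ hX1sub hY1sub).symm
          | exact (dc _ _ hX1sub hY2sub).symm
          | exact (dc _ _ hX2sub hY1sub).symm
          | exact (dc _ _ hX2sub hY2sub).symm
    · apply Set.eq_univ_of_forall
      intro v
      simp only [Finset.mem_insert, Finset.mem_singleton, Set.mem_iUnion, exists_prop]
      rcases hXY v with h | h
      · by_cases hv : v = x0
        · exact ⟨X1, Or.inl rfl, by rw [hv]; exact rfl⟩
        · exact ⟨X2, Or.inr (Or.inl rfl), ⟨h, fun he => hv (Set.mem_singleton_iff.mp he)⟩⟩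
      · by_cases hv : v = y0
        · exact ⟨Y1, Or.inr (Or.inr (Or.inl rfl)), by rw [hv]; exact rfl⟩
        · exact ⟨Y2, Or.inr (Or.inr (Or.inr rfl)),
            ⟨h, fun he => hv (Set.mem_singleton_iff.mp he)⟩⟩
    · intro A hA
      right
      simp only [Finset.mem_insert, Finset.mem_singleton] at hA
      rcases hA with rfl | rfl | rfl | rfl
      · exact ⟨X2, by simp, Ne.symm h12, co12⟩
      · exact ⟨X1, by simp, h12, aux_kcoal_symm co12⟩
      · exact ⟨Y2, by simp, Ne.symm hY12, coY12⟩
      · exact ⟨Y1, by simp, hY12, aux_kcoal_symm coY12⟩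
  have hPcard : ({X1, X2, Y1, Y2} : Finset (Set V)).card = 4 := by
    rw [Finset.card_insert_of_notMem (by simp [h12, h1Y1, h1Y2]),
      Finset.card_insert_of_notMem (by simp [h2Y1, h2Y2]),
      Finset.card_insert_of_notMem (by simp [hY12]),
      Finset.card_singleton]
  have hmem4 : (4 : ℕ) ∈
      {n | ∃ Q : Finset (Set V), KCoalitionPartition G 3 Q ∧ Q.card = n} :=
    ⟨_, hPart, hPcard⟩
  have hub : ∀ n ∈ {n | ∃ Q : Finset (Set V), KCoalitionPartition G 3 Q ∧ Q.card = n},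
      n ≤ 4 := by
    rintro n ⟨Q, hQ, rfl⟩
    exact aux_upper hcubic Q hQ
  unfold kCoalitionNumber
  exact le_antisymm (csSup_le ⟨4, hmem4⟩ hub) (le_csSup ⟨4, hub⟩ hmem4)
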